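/- Let ε = E_{(s,a)∼ρ} D_KL(P(·|s,a) ‖ P̂(·|s,a)) where ρ is a state-action distribution, and suppose ‖V‖_∞ ≤ R_max/(1−γ). Then |Σ_{t≥0} γ^{t+1} E_{(s_t,a_t)}[Σ_{s'} V(s')(P̂(s'|s_t,a_t) − P(s'|s_t,a_t))]| ≤ (γ R_max/(1−γ)²)·√(2ε), where each (s_t,a_t) pair is distributed according to a sequence of distributions whose average KL is at most ε. -/

import Mathlib

open Real Set




noncomputable def Ffn (x : ℝ) : ℝ := Real.log x - 3*(x-1)*(x+5)/(2*(x+2)^2)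
noncomputable def gfn (x : ℝ) : ℝ := x * Real.log x - x + 1 - 3*(x-1)^2/(2*(x+2))

lemma hasDerivAt_Ffn {x : ℝ} (hx : 0 < x) :
    HasDerivAt Ffn (1/x - 27/(x+2)^3) x := by
  have hx2 : (2*(x+2)^2) ≠ 0 := by positivity
  have h1 : HasDerivAt Real.log (1/x) x := by
    simpa [one_div] using Real.hasDerivAt_log hx.ne'
  have hu : HasDerivAt (fun x : ℝ => 3*(x-1)*(x+5)) (3*(x-1) + 3*(x+5)) x := by
    have := (((hasDerivAt_id x).sub_const 1).const_mul 3).mul ((hasDerivAt_id x).add_const 5)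
    refine this.congr_deriv (Eq.symm ?_); simp only [id_eq]; ring
  have hv : HasDerivAt (fun x : ℝ => 2*(x+2)^2) (2*(2*(x+2))) x := by
    have := (((hasDerivAt_id x).add_const 2).pow 2).const_mul 2
    refine this.congr_deriv (Eq.symm ?_); simp only [id_eq]; ring
  have h2 := hu.div hv hx2
  have := h1.sub h2
  refine this.congr_deriv (Eq.symm ?_)
  field_simp
  ring

lemma hasDerivAt_gfn {x : ℝ} (hx : 0 < x) : HasDerivAt gfn (Ffn x) x := by
  have hx2 : (2*(x+2)) ≠ 0 := by positivity
  have h1 : HasDerivAt (fun x : ℝ => x * Real.log x) (Real.log x + 1) x :=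
    Real.hasDerivAt_mul_log hx.ne'
  have hu : HasDerivAt (fun x : ℝ => 3*(x-1)^2) (3*(2*(x-1))) x := by
    have := (((hasDerivAt_id x).sub_const 1).pow 2).const_mul 3
    refine this.congr_deriv (Eq.symm ?_); simp only [id_eq]; ring
  have hv : HasDerivAt (fun x : ℝ => 2*(x+2)) 2 x := by
    have := (((hasDerivAt_id x).add_const 2)).const_mul 2
    refine this.congr_deriv (Eq.symm ?_); ring
  have h2 := hu.div hv hx2
  have := ((h1.sub (hasDerivAt_id x)).add_const 1).sub h2
  refine this.congr_deriv (Eq.symm ?_)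
  unfold Ffn
  field_simp
  ring

lemma Ffn_mono : MonotoneOn Ffn (Ioi (0:ℝ)) := by
  apply monotoneOn_of_deriv_nonneg (convex_Ioi 0)
  · intro x hx
    exact (hasDerivAt_Ffn hx).continuousAt.continuousWithinAt
  · rw [interior_Ioi]
    intro x hx
    exact (hasDerivAt_Ffn hx).differentiableAt.differentiableWithinAt
  · rw [interior_Ioi]
    intro x hx
    rw [(hasDerivAt_Ffn hx).deriv]
    have hx : (0:ℝ) < x := hx
    have h3 : (0:ℝ) < (x+2)^3 := by positivity
    have key : 27 * x ≤ (x+2)^3 := by nlinarith [sq_nonneg (x-1), hx.le]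
    rw [sub_nonneg, div_le_div_iff₀ h3 hx]
    nlinarith

lemma Ffn_one : Ffn 1 = 0 := by simp [Ffn]

lemma gfn_nonneg {x : ℝ} (hx : 0 < x) : 0 ≤ gfn x := by
  rcases le_total 1 x with h | h
  · have hmono : MonotoneOn gfn (Ici (1:ℝ)) := by
      apply monotoneOn_of_deriv_nonneg (convex_Ici 1)
      · intro y hy
        exact (hasDerivAt_gfn (lt_of_lt_of_le one_pos hy)).continuousAt.continuousWithinAt
      · rw [interior_Ici]
        intro y hy
        exact (hasDerivAt_gfn (lt_trans one_pos hy)).differentiableAt.differentiableWithinAt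
      · rw [interior_Ici]
        intro y hy
        have hy1 : (1:ℝ) < y := hy
        rw [(hasDerivAt_gfn (lt_trans one_pos hy1)).deriv]
        calc (0:ℝ) = Ffn 1 := Ffn_one.symm
        _ ≤ Ffn y := Ffn_mono (mem_Ioi.2 one_pos) (mem_Ioi.2 (lt_trans one_pos hy1)) hy1.le
    have : gfn 1 ≤ gfn x := hmono (mem_Ici.2 le_rfl) (mem_Ici.2 h) h
    simpa [gfn] using this
  · have hanti : AntitoneOn gfn (Ioc (0:ℝ) 1) := by
      apply antitoneOn_of_deriv_nonpos (convex_Ioc 0 1)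
      · intro y hy
        exact (hasDerivAt_gfn hy.1).continuousAt.continuousWithinAt
      · rw [interior_Ioc]
        intro y hy
        exact (hasDerivAt_gfn hy.1).differentiableAt.differentiableWithinAt
      · rw [interior_Ioc]
        intro y hy
        rw [(hasDerivAt_gfn hy.1).deriv]
        calc Ffn y ≤ Ffn 1 := Ffn_mono (mem_Ioi.2 hy.1) (mem_Ioi.2 one_pos) hy.2.le
        _ = 0 := Ffn_one
    have : gfn 1 ≤ gfn x := hanti ⟨hx, h⟩ ⟨one_pos, le_rfl⟩ h
    simpa [gfn] using this

/-- Pointwise Pinsker-type bound. -/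
lemma pointwise_pinsker {p q : ℝ} (hp : 0 ≤ p) (hq : 0 ≤ q) (habs : q = 0 → p = 0) :
    3*(p-q)^2 ≤ 2*(p+2*q) * (p * Real.log (p/q) - p + q) := by
  rcases eq_or_lt_of_le hq with h0 | hqpos
  · rw [habs h0.symm, ← h0]; norm_num
  · have hx : 0 ≤ p / q := div_nonneg hp hqpos.le
    rcases eq_or_lt_of_le hp with hp0 | hppos
    · rw [← hp0]
      have : 3*(0-q)^2 ≤ 2*(0+2*q)*q := by nlinarith
      simpa using this
    · have hg := gfn_nonneg (div_pos hppos hqpos)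
      unfold gfn at hg
      have h2 : (0:ℝ) < 2*(p/q+2) := by positivity
      rw [sub_nonneg, div_le_iff₀ h2] at hg
      have hkey : 3*(p/q-1)^2 ≤ (p/q * Real.log (p/q) - p/q + 1) * (2*(p/q+2)) := hg
      have hq2 : (0:ℝ) < q^2 := by positivity
      have := mul_le_mul_of_nonneg_left hkey (le_of_lt hq2)
      calc 3*(p-q)^2 = q^2 * (3*(p/q-1)^2) := by field_simp
      _ ≤ q^2 * ((p/q * Real.log (p/q) - p/q + 1) * (2*(p/q+2))) := this
      _ = 2*(p+2*q) * (p * Real.log (p/q) - p + q) := by field_simp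

/-- Finite Pinsker inequality. -/
lemma pinsker_fin {S : Type*} [Fintype S] (p q : S → ℝ)
    (hp0 : ∀ s, 0 ≤ p s) (hq0 : ∀ s, 0 ≤ q s)
    (hp1 : ∑ s, p s = 1) (hq1 : ∑ s, q s = 1)
    (habs : ∀ s, q s = 0 → p s = 0) :
    (∑ s, |p s - q s|)^2 ≤ 2 * ∑ s, p s * Real.log (p s / q s) := by
  set w : S → ℝ := fun s => (p s + 2 * q s)/3 with hw
  set φ : S → ℝ := fun s => p s * Real.log (p s / q s) - p s + q s with hφ
  have hw0 : ∀ s, 0 ≤ w s := fun s => by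
    have := hp0 s; have := hq0 s; simp only [hw]; positivity
  have hwsum : ∑ s, w s = 1 := by
    simp only [hw]
    rw [← Finset.sum_div, Finset.sum_add_distrib, hp1, ← Finset.mul_sum, hq1]
    norm_num
  have hφsum : ∑ s, φ s = ∑ s, p s * Real.log (p s / q s) := by
    simp only [hφ, sub_add_eq_add_sub, Finset.sum_sub_distrib, Finset.sum_add_distrib, hp1, hq1]
    ring
  have hφ0 : ∀ s, 0 ≤ φ s := by
    intro s
    rcases eq_or_lt_of_le (hq0 s) with h0 | hq
    · have hp := habs s h0.symm
      simp [hφ, hp, ← h0]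
    rcases eq_or_lt_of_le (hp0 s) with h0' | hp
    · simp only [hφ, ← h0']
      simpa using hq.le
    · have key := pointwise_pinsker (hp0 s) (hq0 s) (habs s)
      simp only [hφ]
      nlinarith [sq_nonneg (p s - q s), hp, hq]
  -- pointwise: (p-q)²/w ≤ 2 φ
  have hpt : ∀ s, (p s - q s)^2 / w s ≤ 2 * φ s := by
    intro s
    rcases eq_or_lt_of_le (hw0 s) with h0 | hpos
    · have hq : q s = 0 := by
        have := hp0 s; have := hq0 s
        simp only [hw] at h0; nlinarith [h0.symm]
      have hp := habs s hq
      simp [hp, hq, hφ0 s]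
    · rw [div_le_iff₀ hpos]
      have key := pointwise_pinsker (hp0 s) (hq0 s) (habs s)
      have hwval : w s = (p s + 2 * q s)/3 := rfl
      have hφval : φ s = p s * Real.log (p s / q s) - p s + q s := rfl
      rw [hwval] at hpos ⊢
      rw [hφval]
      nlinarith [key]
  -- Cauchy-Schwarz
  have key : (∑ s, |p s - q s|)^2 ≤ (∑ s, w s) * (∑ s, (p s - q s)^2 / w s) := by
    have hrw : ∀ s ∈ Finset.univ, |p s - q s| =
        Real.sqrt (w s) * (|p s - q s| / Real.sqrt (w s)) := by
      intro s _
      rcases eq_or_lt_of_le (hw0 s) with h0 | hpos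
      · have hq : q s = 0 := by
          have := hp0 s; have := hq0 s
          simp only [hw] at h0; nlinarith [h0.symm]
        have hp := habs s hq
        simp [hp, hq]
      · have hs : Real.sqrt (w s) ≠ 0 := by positivity
        field_simp
    rw [Finset.sum_congr rfl hrw]
    have := Finset.sum_mul_sq_le_sq_mul_sq Finset.univ
      (fun s => Real.sqrt (w s)) (fun s => |p s - q s| / Real.sqrt (w s))
    apply le_trans this
    apply mul_le_mul
    · apply le_of_eq
      apply Finset.sum_congr rfl
      intro s _
      exact Real.sq_sqrt (hw0 s)
    · apply Finset.sum_le_sum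
      intro s _
      rcases eq_or_lt_of_le (hw0 s) with h0 | hpos
      · have hq : q s = 0 := by
          have := hp0 s; have := hq0 s
          simp only [hw] at h0; nlinarith [h0.symm]
        have hp := habs s hq
        simp [hp, hq]
      · rw [div_pow, Real.sq_sqrt (hw0 s), sq_abs]
    · positivity
    · positivity
  calc (∑ s, |p s - q s|)^2 ≤ (∑ s, w s) * (∑ s, (p s - q s)^2 / w s) := key
  _ = ∑ s, (p s - q s)^2 / w s := by rw [hwsum, one_mul]
  _ ≤ ∑ s, 2 * φ s := Finset.sum_le_sum (fun s _ => hpt s)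
  _ = 2 * ∑ s, φ s := by rw [Finset.mul_sum]
  _ = 2 * ∑ s, p s * Real.log (p s / q s) := by rw [hφsum]

lemma kl_nonneg {S : Type*} [Fintype S] (p q : S → ℝ)
    (hp0 : ∀ s, 0 ≤ p s) (hq0 : ∀ s, 0 ≤ q s)
    (hp1 : ∑ s, p s = 1) (hq1 : ∑ s, q s = 1)
    (habs : ∀ s, q s = 0 → p s = 0) :
    0 ≤ ∑ s, p s * Real.log (p s / q s) := by
  have := pinsker_fin p q hp0 hq0 hp1 hq1 habs
  nlinarith [sq_nonneg (∑ s, |p s - q s|)]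

lemma pinsker_fin' {S : Type*} [Fintype S] (p q : S → ℝ)
    (hp0 : ∀ s, 0 ≤ p s) (hq0 : ∀ s, 0 ≤ q s)
    (hp1 : ∑ s, p s = 1) (hq1 : ∑ s, q s = 1)
    (habs : ∀ s, q s = 0 → p s = 0) :
    ∑ s, |p s - q s| ≤ Real.sqrt (2 * ∑ s, p s * Real.log (p s / q s)) :=
  Real.le_sqrt_of_sq_le (pinsker_fin p q hp0 hq0 hp1 hq1 habs)

lemma tsum_geom_abs_bound (γ C : ℝ) (hγ0 : 0 < γ) (hγ1 : γ < 1) (hC0 : 0 ≤ C)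
    (c : ℕ → ℝ) (hct : ∀ t, |c t| ≤ C) :
    |∑' t : ℕ, γ ^ (t + 1) * c t| ≤ γ * C * (1 - γ)⁻¹ := by
  have hb : ∀ t : ℕ, |γ ^ (t + 1) * c t| ≤ (γ * C) * γ ^ t := by
    intro t
    rw [abs_mul, abs_of_nonneg (pow_nonneg hγ0.le _), pow_succ]
    calc γ ^ t * γ * |c t| ≤ γ ^ t * γ * C :=
          mul_le_mul_of_nonneg_left (hct t) (by positivity)
    _ = (γ * C) * γ ^ t := by ring
  have hgeo : Summable (fun t : ℕ => (γ * C) * γ ^ t) :=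
    (summable_geometric_of_lt_one hγ0.le hγ1).mul_left _
  have habsum : Summable (fun t : ℕ => |γ ^ (t + 1) * c t|) :=
    Summable.of_nonneg_of_le (fun t => abs_nonneg _) hb hgeo
  calc |∑' t : ℕ, γ ^ (t + 1) * c t| ≤ ∑' t : ℕ, |γ ^ (t + 1) * c t| := by
        simpa only [Real.norm_eq_abs] using
          norm_tsum_le_tsum_norm (f := fun t : ℕ => γ ^ (t + 1) * c t)
            (by simpa only [Real.norm_eq_abs] using habsum)
  _ ≤ ∑' t : ℕ, (γ * C) * γ ^ t := Summable.tsum_le_tsum hb habsum hgeo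
  _ = γ * C * (1 - γ)⁻¹ := by rw [tsum_mul_left, tsum_geometric_of_lt_one hγ0.le hγ1]


/-- Discounted accumulation of model-mismatch error (Lemma on |T1|): if for each
time `t` the state-action pair is drawn from a distribution `μ t` on `S × A`
whose expected KL between the kernels `P` and `Phat` is at most `ε`, and the
value function satisfies `‖V‖∞ ≤ Rmax / (1 - γ)`, then
`|∑ₜ γ^{t+1} E_{μ t}[∑_{s'} V s' (Phat(s'|s,a) - P(s'|s,a))]|
  ≤ (γ Rmax / (1-γ)²) √(2ε)`. -/
theorem discounted_model_mismatch_bound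
    {S A : Type*} [Fintype S] [Fintype A]
    (γ Rmax ε : ℝ) (hγ : γ ∈ Set.Ioo (0 : ℝ) 1) (hRmax : 0 ≤ Rmax) (hε : 0 ≤ ε)
    (P Phat : S → A → S → ℝ)
    (hP0 : ∀ s a s', 0 ≤ P s a s') (hP1 : ∀ s a, ∑ s', P s a s' = 1)
    (hPhat0 : ∀ s a s', 0 ≤ Phat s a s') (hPhat1 : ∀ s a, ∑ s', Phat s a s' = 1)
    (habs : ∀ s a s', Phat s a s' = 0 → P s a s' = 0)
    (μ : ℕ → S × A → ℝ)
    (hμ0 : ∀ t sa, 0 ≤ μ t sa) (hμ1 : ∀ t, ∑ sa, μ t sa = 1)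
    (hKL : ∀ t, ∑ sa : S × A,
        μ t sa * ∑ s', P sa.1 sa.2 s' * Real.log (P sa.1 sa.2 s' / Phat sa.1 sa.2 s') ≤ ε)
    (V : S → ℝ) (hV : ∀ s, |V s| ≤ Rmax / (1 - γ)) :
    |∑' t : ℕ, γ ^ (t + 1) *
        ∑ sa : S × A, μ t sa * ∑ s', V s' * (Phat sa.1 sa.2 s' - P sa.1 sa.2 s')| ≤
      γ * Rmax / (1 - γ) ^ 2 * Real.sqrt (2 * ε) := by
  obtain ⟨hγ0, hγ1⟩ := hγ
  have h1γ : (0:ℝ) < 1 - γ := by linarith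
  set R : ℝ := Rmax / (1 - γ) with hR
  have hR0 : 0 ≤ R := div_nonneg hRmax h1γ.le
  set k : S × A → ℝ := fun sa => ∑ s', P sa.1 sa.2 s' * Real.log (P sa.1 sa.2 s' / Phat sa.1 sa.2 s')
    with hk
  have hk0 : ∀ sa, 0 ≤ k sa := fun sa =>
    kl_nonneg _ _ (hP0 sa.1 sa.2) (hPhat0 sa.1 sa.2) (hP1 sa.1 sa.2) (hPhat1 sa.1 sa.2)
      (habs sa.1 sa.2)
  set c : ℕ → ℝ := fun t => ∑ sa : S × A, μ t sa * ∑ s', V s' * (Phat sa.1 sa.2 s' - P sa.1 sa.2 s')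
    with hc
  set C : ℝ := R * Real.sqrt (2 * ε) with hC
  have hC0 : 0 ≤ C := mul_nonneg hR0 (Real.sqrt_nonneg _)
  -- step 1: per time bound |c t| ≤ C
  have hct : ∀ t, |c t| ≤ C := by
    intro t
    have step1 : |c t| ≤ ∑ sa : S × A, μ t sa * (R * Real.sqrt (2 * k sa)) := by
      refine le_trans (Finset.abs_sum_le_sum_abs _ _) (Finset.sum_le_sum ?_)
      intro sa _
      rw [abs_mul, abs_of_nonneg (hμ0 t sa)]
      refine mul_le_mul_of_nonneg_left ?_ (hμ0 t sa)
      have h2 : |∑ s', V s' * (Phat sa.1 sa.2 s' - P sa.1 sa.2 s')| ≤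
          ∑ s', R * |P sa.1 sa.2 s' - Phat sa.1 sa.2 s'| := by
        refine le_trans (Finset.abs_sum_le_sum_abs _ _) (Finset.sum_le_sum ?_)
        intro s' _
        rw [abs_mul, abs_sub_comm]
        exact mul_le_mul_of_nonneg_right (hV s') (abs_nonneg _)
      rw [← Finset.mul_sum] at h2
      refine le_trans h2 (mul_le_mul_of_nonneg_left ?_ hR0)
      exact pinsker_fin' _ _ (hP0 sa.1 sa.2) (hPhat0 sa.1 sa.2) (hP1 sa.1 sa.2)
        (hPhat1 sa.1 sa.2) (habs sa.1 sa.2)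
    -- step 2: Jensen via Cauchy-Schwarz
    have step2 : ∑ sa : S × A, μ t sa * Real.sqrt (2 * k sa) ≤ Real.sqrt (2 * ε) := by
      have hnn : 0 ≤ ∑ sa : S × A, μ t sa * Real.sqrt (2 * k sa) :=
        Finset.sum_nonneg fun sa _ => mul_nonneg (hμ0 t sa) (Real.sqrt_nonneg _)
      rw [← Real.sqrt_sq hnn]
      apply Real.sqrt_le_sqrt
      have hcs := Finset.sum_mul_sq_le_sq_mul_sq Finset.univ
        (fun sa : S × A => Real.sqrt (μ t sa)) (fun sa => Real.sqrt (μ t sa * (2 * k sa)))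
      have heq : ∀ sa : S × A, μ t sa * Real.sqrt (2 * k sa) =
          Real.sqrt (μ t sa) * Real.sqrt (μ t sa * (2 * k sa)) := by
        intro sa
        rw [← Real.sqrt_mul (hμ0 t sa), ← mul_assoc,
          Real.sqrt_mul (mul_nonneg (hμ0 t sa) (hμ0 t sa)),
          Real.sqrt_mul_self (hμ0 t sa)]
      calc (∑ sa : S × A, μ t sa * Real.sqrt (2 * k sa))^2
          = (∑ sa : S × A, Real.sqrt (μ t sa) * Real.sqrt (μ t sa * (2 * k sa)))^2 := by
            rw [Finset.sum_congr rfl fun sa _ => heq sa]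
        _ ≤ (∑ sa : S × A, Real.sqrt (μ t sa)^2) * ∑ sa : S × A, Real.sqrt (μ t sa * (2 * k sa))^2 :=
            hcs
        _ = (∑ sa : S × A, μ t sa) * ∑ sa : S × A, μ t sa * (2 * k sa) := by
            rw [Finset.sum_congr rfl fun sa _ => Real.sq_sqrt (hμ0 t sa),
              Finset.sum_congr rfl fun sa _ =>
                Real.sq_sqrt (mul_nonneg (hμ0 t sa) (mul_nonneg zero_le_two (hk0 sa)))]
        _ ≤ 2 * ε := by
            rw [hμ1 t, one_mul]
            have : ∑ sa : S × A, μ t sa * (2 * k sa) = 2 * ∑ sa : S × A, μ t sa * k sa := by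
              rw [Finset.mul_sum]; exact Finset.sum_congr rfl fun sa _ => by ring
            rw [this]
            exact mul_le_mul_of_nonneg_left (hKL t) zero_le_two
    calc |c t| ≤ ∑ sa : S × A, μ t sa * (R * Real.sqrt (2 * k sa)) := step1
    _ = R * ∑ sa : S × A, μ t sa * Real.sqrt (2 * k sa) := by
        rw [Finset.mul_sum]; exact Finset.sum_congr rfl fun sa _ => by ring
    _ ≤ R * Real.sqrt (2 * ε) := mul_le_mul_of_nonneg_left step2 hR0
    _ = C := rfl
  calc |∑' t : ℕ, γ ^ (t + 1) * c t| ≤ γ * C * (1 - γ)⁻¹ :=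
        tsum_geom_abs_bound γ C hγ0 hγ1 hC0 c hct
  _ = γ * Rmax / (1 - γ) ^ 2 * Real.sqrt (2 * ε) := by
      rw [hC, hR]; field_simp
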